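/- Let G be a finite simple graph with at least one vertex whose edges are colored with two colors by a function c such that G contains no alternating cycle, i.e., in every cycle of G there are two adjacent edges of the same color. Then G contains a vertex v such that for every connected component C of G − v, all edges of G joining v to vertices of C have the same color. -/

import Mathlib

set_option linter.unusedSectionVars false
set_option linter.unusedVariables false
set_option maxHeartbeats 1000000

/-- A closed walk `w` is an alternating (properly colored) cycle with respect to the edge
coloring `c` if it is a cycle and every two consecutive edges along it (cyclically, including
the pair consisting of the last and the first edge) receive different colors. -/
def SimpleGraph.IsAlternatingCycle {V : Type*} (G : SimpleGraph V) (c : Sym2 V → Fin 2)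
    {v : V} (w : G.Walk v v) : Prop :=
  w.IsCycle ∧ ∀ i : Fin w.edges.length,
    c (w.edges.get i) ≠
      c (w.edges.get ⟨(i.1 + 1) % w.edges.length, Nat.mod_lt _ ((Nat.zero_le _).trans_lt i.isLt)⟩)

private def AltCycle {W : Type*} (G : SimpleGraph W) (m : W → W) (A : Set W) : Prop :=
  ∃ (k : ℕ) (u : ℕ → W), 2 ≤ k ∧ (∀ i, u i ∈ A) ∧ (∀ i, u (i + k) = u i) ∧
    (∀ i, G.Adj (m (u i)) (u (i + 1))) ∧
    (∀ i j, i % k ≠ j % k → u i ≠ u j ∧ u i ≠ m (u j))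

private lemma per_reduce {W : Type*} (u : ℕ → W) (k : ℕ) (hper : ∀ i, u (i + k) = u i) :
    ∀ i, u i = u (i % k) := by
  have key : ∀ q r, u (r + q * k) = u r := by
    intro q
    induction q with
    | zero => simp
    | succ n ih =>
      intro r
      have h : r + (n + 1) * k = (r + n * k) + k := by ring
      rw [h, hper, ih]
  intro i
  conv_lhs => rw [← Nat.mod_add_div' i k]
  exact key (i / k) (i % k)

private lemma succ_mod_of_lt {len i : ℕ} (h2 : 2 ≤ len) (h : i % len + 1 < len) :
    (i + 1) % len = i % len + 1 := by
  have h1 : (1 : ℕ) % len = 1 := Nat.mod_eq_of_lt (by omega)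
  rw [Nat.add_mod, h1, Nat.mod_eq_of_lt h]

private lemma succ_mod_of_eq {len i : ℕ} (h2 : 2 ≤ len) (h : i % len + 1 = len) :
    (i + 1) % len = 0 := by
  have h1 : (1 : ℕ) % len = 1 := Nat.mod_eq_of_lt (by omega)
  rw [Nat.add_mod, h1, h, Nat.mod_self]

private lemma mk_altCycle {W : Type*} {G : SimpleGraph W} {m : W → W} {A : Set W}
    (len : ℕ) (q : ℕ → W) (h2 : 2 ≤ len)
    (hmem : ∀ i, i < len → q i ∈ A)
    (hstep : ∀ i, i + 1 < len → G.Adj (m (q i)) (q (i + 1)))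
    (hwrap : G.Adj (m (q (len - 1))) (q 0))
    (hdis : ∀ i j, i < j → j < len → q i ≠ q j ∧ q i ≠ m (q j) ∧ m (q i) ≠ q j) :
    AltCycle G m A := by
  have hlen0 : 0 < len := by omega
  refine ⟨len, fun i => q (i % len), h2, ?_, ?_, ?_, ?_⟩
  · intro i; exact hmem _ (Nat.mod_lt _ hlen0)
  · intro i; simp [Nat.add_mod_right]
  · intro i
    show G.Adj (m (q (i % len))) (q ((i + 1) % len))
    rcases Nat.lt_or_ge (i % len + 1) len with h | h
    · rw [succ_mod_of_lt h2 h]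
      exact hstep _ h
    · have hi : i % len < len := Nat.mod_lt _ hlen0
      have hieq : i % len + 1 = len := by omega
      rw [succ_mod_of_eq h2 hieq]
      have he : i % len = len - 1 := by omega
      rw [he]
      exact hwrap
  · intro i j hij
    show q (i % len) ≠ q (j % len) ∧ q (i % len) ≠ m (q (j % len))
    have hi : i % len < len := Nat.mod_lt _ hlen0
    have hj : j % len < len := Nat.mod_lt _ hlen0
    rcases Nat.lt_or_ge (i % len) (j % len) with h | h
    · exact ⟨(hdis _ _ h hj).1, (hdis _ _ h hj).2.1⟩
    · have h' : j % len < i % len := by omega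
      exact ⟨fun he => (hdis _ _ h' hi).1 he.symm, fun he => (hdis _ _ h' hi).2.2 he.symm⟩

/-- A "blossom path" package: an alternating path staying inside the blossom. -/
private def BPpkg {W : Type*} (G : SimpleGraph W) (m : W → W) (A S : Set W) (y : W)
    (bl : ℕ) (bp : ℕ → W) : Prop :=
  1 ≤ bl ∧ (∀ i, i + 1 < bl → G.Adj (m (bp i)) (bp (i + 1))) ∧
  (∀ i, i < bl → bp i ∈ A) ∧
  (∀ i, i < bl → (bp i ∈ S ∨ bp i = y ∨ bp i = m y) ∧ (m (bp i) ∈ S ∨ m (bp i) = y ∨ m (bp i) = m y)) ∧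
  (∀ i j, i < j → j < bl → bp i ≠ bp j ∧ bp i ≠ m (bp j) ∧ m (bp i) ≠ bp j)

section Blossom

variable {W : Type*} {G : SimpleGraph W} {m : W → W} {A : Set W}
variable {d : ℕ} {u : ℕ → W} {y : W} {S : Set W}

-- basic hypotheses
variable (hinvA : ∀ v ∈ A, m (m v) = v) (hmemA : ∀ v ∈ A, m v ∈ A) (hneA : ∀ v ∈ A, m v ≠ v)
variable (humem : ∀ i, u i ∈ A) (hustep : ∀ i, G.Adj (m (u i)) (u (i + 1)))
variable (hP1 : ∀ s t, s < t → t ≤ d → u s ≠ u t)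
variable (hP2 : ∀ s t, s < t → t - s < d → u t ≠ m (u s))
variable (hd2 : 2 ≤ d)
variable (hcross : u d = m (u 0))
variable (hy : y = m (u 0))
variable (hSdef : ∀ x, x ∈ S ↔ ∃ t, 1 ≤ t ∧ t < d ∧ (x = u t ∨ x = m (u t)))

include hy hcross in
private lemma BL_y_eq : y = u d := by rw [hy, hcross]

include hy humem hinvA in
private lemma BL_my : m y = u 0 := by rw [hy]; exact hinvA _ (humem 0)

include humem hy hcross in
private lemma BL_y_A : y ∈ A := by rw [BL_y_eq hcross hy]; exact humem d

include humem hinvA hy in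
private lemma BL_my_A : m y ∈ A := by rw [BL_my hinvA humem hy]; exact humem 0

include hSdef humem hmemA in
private lemma BL_S_A : ∀ x ∈ S, x ∈ A := by
  intro x hx
  obtain ⟨t, _, _, h | h⟩ := (hSdef x).1 hx
  · rw [h]; exact humem t
  · rw [h]; exact hmemA _ (humem t)

include hSdef humem hinvA in
private lemma BL_S_closed : ∀ x ∈ S, m x ∈ S := by
  intro x hx
  obtain ⟨t, h1, h2, h | h⟩ := (hSdef x).1 hx
  · exact (hSdef _).2 ⟨t, h1, h2, Or.inr (by rw [h])⟩
  · refine (hSdef _).2 ⟨t, h1, h2, Or.inl ?_⟩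
    rw [h, hinvA _ (humem t)]

include hSdef hP1 hP2 hcross hy hinvA humem in
private lemma BL_y_notS : y ∉ S := by
  intro hx
  obtain ⟨t, h1, h2, h | h⟩ := (hSdef y).1 hx
  · exact hP1 t d h2 le_rfl (by rw [← h, BL_y_eq hcross hy])
  · -- y = m (u t) → m y = u t → u 0 = u t
    have : m y = u t := by rw [h, hinvA _ (humem t)]
    rw [BL_my hinvA humem hy] at this
    exact hP1 0 t h1 (le_of_lt (by omega)) this

include hSdef hP1 hcross hy hinvA humem in
private lemma BL_my_notS : m y ∉ S := by
  intro hx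
  obtain ⟨t, h1, h2, h | h⟩ := (hSdef (m y)).1 hx
  · rw [BL_my hinvA humem hy] at h
    exact hP1 0 t h1 (by omega) h
  · -- u 0 = m (u t) → m (u 0) = u t → u d = u t
    rw [BL_my hinvA humem hy] at h
    have : u d = u t := by rw [hcross, h, hinvA _ (humem t)]
    exact hP1 t d h2 le_rfl this.symm

include hneA humem hcross hy in
private lemma BL_y_ne_my : y ≠ m y := by
  have : y ∈ A := by rw [BL_y_eq hcross hy]; exact humem d
  exact (hneA _ this).symm

include hustep hy in
private lemma BL_chain_first : G.Adj y (u 1) := by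
  rw [hy]; exact hustep 0

include hustep hcross hy hd2 in
private lemma BL_chain_last : G.Adj (m (u (d - 1))) y := by
  have := hustep (d - 1)
  have hd : d - 1 + 1 = d := by omega
  rw [hd] at this
  rw [BL_y_eq hcross hy]
  exact this

end Blossom

section Blossom2

variable {W : Type*} {G : SimpleGraph W} {m : W → W} {A : Set W}
variable {d : ℕ} {u : ℕ → W} {y : W} {S : Set W}
variable (hinvA : ∀ v ∈ A, m (m v) = v) (hmemA : ∀ v ∈ A, m v ∈ A) (hneA : ∀ v ∈ A, m v ≠ v)
variable (humem : ∀ i, u i ∈ A) (hustep : ∀ i, G.Adj (m (u i)) (u (i + 1)))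
variable (hP1 : ∀ s t, s < t → t ≤ d → u s ≠ u t)
variable (hP2 : ∀ s t, s < t → t - s < d → u t ≠ m (u s))
variable (hd2 : 2 ≤ d)
variable (hcross : u d = m (u 0))
variable (hy : y = m (u 0))
variable (hSdef : ∀ x, x ∈ S ↔ ∃ t, 1 ≤ t ∧ t < d ∧ (x = u t ∨ x = m (u t)))

include hinvA in
private lemma BL_minj {x x' : W} (hx : x ∈ A) (hx' : x' ∈ A) (h : m x = m x') : x = x' := by
  have := congrArg m h
  rwa [hinvA _ hx, hinvA _ hx'] at this

include hinvA humem hP1 hP2 in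
private lemma BL_ne_mu {s t : ℕ} (h1 : s < t) (h2 : t - s < d) : u s ≠ m (u t) := by
  intro h
  have : m (u s) = u t := by rw [h, hinvA _ (humem t)]
  exact hP2 s t h1 h2 this.symm

-- `u`-index form of `y` and `m y` will be used throughout:
-- y = u d, m y = u 0.

include hinvA hmemA humem hustep hP1 hP2 hd2 hcross hy hSdef in
private lemma BPfwd :
    ∀ w', (w' ∈ S ∨ w' = y) → ∃ bl bp, BPpkg G m A S y bl bp ∧ bp 0 = w' ∧
      bp (bl - 1) = y ∧ 1 ≤ bl ∧ (w' ∈ S → 2 ≤ bl) := by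
  have hyd : y = u d := BL_y_eq hcross hy
  have hmy : m y = u 0 := BL_my hinvA humem hy
  have hynotS : y ∉ S := BL_y_notS hinvA humem hP1 hP2 hcross hy hSdef
  intro w' hw'
  rcases hw' with hw' | hw'
  · obtain ⟨t, ht1, ht2, hcase | hcase⟩ := (hSdef w').1 hw'
    · -- w' = u t : path u t, u (t+1), ..., u (d-1), y
      refine ⟨d - t + 1, fun i => if i < d - t then u (t + i) else y, ?_, ?_, ?_, by omega,
        fun _ => by omega⟩
      · refine ⟨by omega, ?_, ?_, ?_, ?_⟩
        · intro i hi
          dsimp only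
          rcases Nat.lt_or_ge (i + 1) (d - t) with h | h
          · rw [if_pos (by omega : i < d - t), if_pos h]
            have := hustep (t + i)
            have he : t + i + 1 = t + (i + 1) := by omega
            rwa [he] at this
          · have he : i + 1 = d - t := by omega
            rw [if_pos (by omega : i < d - t), if_neg (by omega : ¬ i + 1 < d - t)]
            have he2 : t + i = d - 1 := by omega
            rw [he2]
            exact BL_chain_last hustep hd2 hcross hy
        · intro i hi
          dsimp only
          by_cases h : i < d - t
          · rw [if_pos h]; exact humem _
          · rw [if_neg h]; rw [hyd]; exact humem d
        · intro i hi
          dsimp only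
          by_cases h : i < d - t
          · rw [if_pos h]
            constructor
            · exact Or.inl ((hSdef _).2 ⟨t + i, by omega, by omega, Or.inl rfl⟩)
            · exact Or.inl ((hSdef _).2 ⟨t + i, by omega, by omega, Or.inr rfl⟩)
          · rw [if_neg h]
            exact ⟨Or.inr (Or.inl rfl), Or.inr (Or.inr rfl)⟩
        · intro i j hij hj
          dsimp only
          by_cases h : j < d - t
          · rw [if_pos (by omega : i < d - t), if_pos h]
            refine ⟨hP1 _ _ (by omega) (by omega), ?_, ?_⟩
            · exact BL_ne_mu hinvA humem hP1 hP2 (by omega) (by omega)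
            · exact (hP2 _ _ (by omega) (by omega)).symm
          · rw [if_pos (by omega : i < d - t), if_neg h]
            refine ⟨?_, ?_, ?_⟩
            · rw [hyd]; exact hP1 _ _ (by omega) le_rfl
            · rw [hmy]; exact (hP1 0 (t + i) (by omega) (by omega)).symm
            · rw [hyd]; exact (hP2 _ _ (by omega) (by omega)).symm
      · dsimp only
        rw [if_pos (by omega : 0 < d - t), hcase, Nat.add_zero]
      · dsimp only
        rw [Nat.add_sub_cancel, if_neg (by omega)]
    · -- w' = m (u t) : path m (u t), m (u (t-1)), ..., m (u 1), y
      refine ⟨t + 1, fun i => if i < t then m (u (t - i)) else y, ?_, ?_, ?_, by omega,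
        fun _ => by omega⟩
      · refine ⟨by omega, ?_, ?_, ?_, ?_⟩
        · intro i hi
          dsimp only
          rcases Nat.lt_or_ge (i + 1) t with h | h
          · rw [if_pos (by omega : i < t), if_pos h]
            rw [hinvA _ (humem _)]
            have := (hustep (t - i - 1)).symm
            have he : t - i - 1 + 1 = t - i := by omega
            have he2 : t - (i + 1) = t - i - 1 := by omega
            rw [he] at this
            rwa [he2]
          · have he : i + 1 = t := by omega
            rw [if_pos (by omega : i < t), if_neg (by omega : ¬ i + 1 < t)]
            have he2 : t - i = 1 := by omega
            rw [he2, hinvA _ (humem _)]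
            exact (BL_chain_first hustep hy).symm
        · intro i hi
          dsimp only
          by_cases h : i < t
          · rw [if_pos h]; exact hmemA _ (humem _)
          · rw [if_neg h]; rw [hyd]; exact humem d
        · intro i hi
          dsimp only
          by_cases h : i < t
          · rw [if_pos h]
            constructor
            · exact Or.inl ((hSdef _).2 ⟨t - i, by omega, by omega, Or.inr rfl⟩)
            · rw [hinvA _ (humem _)]
              exact Or.inl ((hSdef _).2 ⟨t - i, by omega, by omega, Or.inl rfl⟩)
          · rw [if_neg h]
            exact ⟨Or.inr (Or.inl rfl), Or.inr (Or.inr rfl)⟩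
        · intro i j hij hj
          dsimp only
          by_cases h : j < t
          · rw [if_pos (by omega : i < t), if_pos h]
            have hab : t - j < t - i := by omega
            refine ⟨?_, ?_, ?_⟩
            · intro hh
              exact hP1 _ _ hab (by omega) (BL_minj hinvA (humem _) (humem _) hh).symm
            · rw [hinvA _ (humem _)]
              intro hh
              exact BL_ne_mu hinvA humem hP1 hP2 hab (by omega) hh.symm
            · rw [hinvA _ (humem _)]
              exact hP2 _ _ hab (by omega)
          · rw [if_pos (by omega : i < t), if_neg h]
            have hb1 : 1 ≤ t - i := by omega
            have hbd : t - i < d := by omega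
            refine ⟨?_, ?_, ?_⟩
            · intro hh
              -- m (u (t-i)) = y = u d → u (t-i) = m (u d)?? use: m y = u 0
              have : u (t - i) = m y := by
                rw [← hinvA _ (humem (t - i)), hh]
              rw [hmy] at this
              exact hP1 0 (t - i) (by omega) (by omega) this.symm
            · rw [hmy]
              intro hh
              have : u (t - i) = u d := by
                rw [← hinvA _ (humem (t - i)), hh, ← hcross]
              exact hP1 (t - i) d (by omega) le_rfl this
            · rw [hinvA _ (humem _), hyd]
              exact hP1 _ _ (by omega) le_rfl
      · dsimp only
        rw [if_pos (by omega : 0 < t), hcase, Nat.sub_zero]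
      · dsimp only
        rw [Nat.add_sub_cancel, if_neg (by omega)]
  · -- w' = y
    exact ⟨1, fun _ => y, ⟨le_rfl, by omega, fun i _ => by rw [hyd]; exact humem d,
      fun i _ => ⟨Or.inr (Or.inl rfl), Or.inr (Or.inr rfl)⟩, by omega⟩, hw'.symm ▸ rfl, rfl,
      le_rfl, fun h => absurd (hw' ▸ h) hynotS⟩

end Blossom2

/-- The graph obtained by contracting the blossom `S ∪ {y}` onto its base `y`. -/
private def contrG {W : Type*} (G : SimpleGraph W) (S : Set W) (y : W) : SimpleGraph W where
  Adj a b := a ≠ b ∧ a ∉ S ∧ b ∉ S ∧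
    (G.Adj a b ∨ (a = y ∧ ∃ w, (w ∈ S ∨ w = y) ∧ G.Adj w b) ∨
      (b = y ∧ ∃ w, (w ∈ S ∨ w = y) ∧ G.Adj w a))
  symm := by
    constructor
    rintro a b ⟨h1, h2, h3, h4⟩
    refine ⟨h1.symm, h3, h2, ?_⟩
    rcases h4 with h | h | h
    · exact Or.inl h.symm
    · exact Or.inr (Or.inr h)
    · exact Or.inr (Or.inl h)
  loopless := ⟨by rintro a ⟨h1, _⟩; exact h1 rfl⟩

private lemma contrG_adj {W : Type*} {G : SimpleGraph W} {S : Set W} {y : W} {a b : W} :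
    (contrG G S y).Adj a b ↔ a ≠ b ∧ a ∉ S ∧ b ∉ S ∧
    (G.Adj a b ∨ (a = y ∧ ∃ w, (w ∈ S ∨ w = y) ∧ G.Adj w b) ∨
      (b = y ∧ ∃ w, (w ∈ S ∨ w = y) ∧ G.Adj w a)) := Iff.rfl

section Blossom3

variable {W : Type*} {G : SimpleGraph W} {m : W → W} {A : Set W}
variable {d : ℕ} {u : ℕ → W} {y : W} {S : Set W}
variable (hinvA : ∀ v ∈ A, m (m v) = v) (hmemA : ∀ v ∈ A, m v ∈ A) (hneA : ∀ v ∈ A, m v ≠ v)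
variable (hnc : ¬ AltCycle G m A)
variable (humem : ∀ i, u i ∈ A) (hustep : ∀ i, G.Adj (m (u i)) (u (i + 1)))
variable (hP1 : ∀ s t, s < t → t ≤ d → u s ≠ u t)
variable (hP2 : ∀ s t, s < t → t - s < d → u t ≠ m (u s))
variable (hd2 : 2 ≤ d)
variable (hcross : u d = m (u 0))
variable (hy : y = m (u 0))
variable (hSdef : ∀ x, x ∈ S ↔ ∃ t, 1 ≤ t ∧ t < d ∧ (x = u t ∨ x = m (u t)))

include hinvA hmemA in
private lemma BPrev {bl : ℕ} {bp : ℕ → W} (hpkg : BPpkg G m A S y bl bp) :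
    BPpkg G m A S y bl (fun i => m (bp (bl - 1 - i))) := by
  obtain ⟨h1, hstep, hmem, hpair, hdis⟩ := hpkg
  refine ⟨h1, ?_, ?_, ?_, ?_⟩
  · intro i hi
    dsimp only
    have ha : bl - 1 - i < bl := by omega
    rw [hinvA _ (hmem _ ha)]
    have hidx : bl - 1 - (i + 1) + 1 = bl - 1 - i := by omega
    have := (hstep (bl - 1 - (i + 1)) (by omega)).symm
    rwa [hidx] at this
  · intro i hi
    exact hmemA _ (hmem _ (by omega))
  · intro i hi
    dsimp only
    have ha : bl - 1 - i < bl := by omega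
    refine ⟨(hpair _ ha).2, ?_⟩
    rw [hinvA _ (hmem _ ha)]
    exact (hpair _ ha).1
  · intro i j hij hj
    dsimp only
    have ha : bl - 1 - j < bl - 1 - i := by omega
    have hb : bl - 1 - i < bl := by omega
    obtain ⟨hd1, hd2', hd3⟩ := hdis _ _ ha hb
    refine ⟨?_, ?_, ?_⟩
    · intro hh
      exact hd1 (BL_minj hinvA (hmem _ hb) (hmem _ (by omega)) hh).symm
    · rw [hinvA _ (hmem _ (by omega))]
      exact hd2'.symm
    · rw [hinvA _ (hmem _ hb)]
      exact hd3.symm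
end Blossom3

section Blossom4

variable {W : Type*} {G : SimpleGraph W} {m : W → W} {A : Set W}
variable {d : ℕ} {u : ℕ → W} {y : W} {S : Set W}
variable (hinvA : ∀ v ∈ A, m (m v) = v) (hmemA : ∀ v ∈ A, m v ∈ A) (hneA : ∀ v ∈ A, m v ≠ v)
variable (hnc : ¬ AltCycle G m A)
variable (humem : ∀ i, u i ∈ A) (hustep : ∀ i, G.Adj (m (u i)) (u (i + 1)))
variable (hP1 : ∀ s t, s < t → t ≤ d → u s ≠ u t)
variable (hP2 : ∀ s t, s < t → t - s < d → u t ≠ m (u s))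
variable (hd2 : 2 ≤ d)
variable (hcross : u d = m (u 0))
variable (hy : y = m (u 0))
variable (hSdef : ∀ x, x ∈ S ↔ ∃ t, 1 ≤ t ∧ t < d ∧ (x = u t ∨ x = m (u t)))

include hinvA hmemA humem hustep hP1 hP2 hd2 hcross hy hSdef hnc in
private lemma noSMy : ∀ x ∈ S, ¬ G.Adj x (m y) := by
  intro x hx hadjxmy
  obtain ⟨bl, bp, hpkg, h0, hlast, h1b, h2b⟩ :=
    BPfwd hinvA hmemA humem hustep hP1 hP2 hd2 hcross hy hSdef x (Or.inl hx)
  obtain ⟨hb1, hbstep, hbmem, hbpair, hbdis⟩ := hpkg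
  exact hnc (mk_altCycle bl bp (h2b hx) hbmem hbstep
    (by rw [hlast, h0]; exact hadjxmy.symm) hbdis)

include hinvA hmemA hneA hnc in
private lemma assemble
    (hScl : ∀ x ∈ S, m x ∈ S) (hSA : ∀ x ∈ S, x ∈ A) (hyA : y ∈ A)
    {k' : ℕ} {w' : ℕ → W} {bl : ℕ} {bp : ℕ → W}
    (hk2 : 2 ≤ k')
    (hwA : ∀ t, w' t ∈ A)
    (hwfar : ∀ t, t % k' ≠ 0 → w' t ∉ S ∧ w' t ≠ y ∧ w' t ≠ m y)
    (hwdis : ∀ i j, i % k' ≠ j % k' → w' i ≠ w' j ∧ w' i ≠ m (w' j))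
    (hwstep : ∀ j, 1 ≤ j → j + 1 ≤ k' - 1 → G.Adj (m (w' j)) (w' (j + 1)))
    (hpkg : BPpkg G m A S y bl bp)
    (hmid : G.Adj (m (bp (bl - 1))) (w' 1))
    (hwrap : G.Adj (m (w' (k' - 1))) (bp 0)) : False := by
  obtain ⟨hb1, hbstep, hbmem, hbpair, hbdis⟩ := hpkg
  -- auxiliary facts about the w'-part
  have hwfar' : ∀ t, t % k' ≠ 0 → m (w' t) ∉ S ∧ m (w' t) ≠ y ∧ m (w' t) ≠ m y := by
    intro t ht
    obtain ⟨hs, hy1, hmy1⟩ := hwfar t ht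
    refine ⟨?_, ?_, ?_⟩
    · intro hmem
      have : m (m (w' t)) ∈ S := hScl _ hmem
      rw [hinvA _ (hwA t)] at this
      exact hs this
    · intro hh
      apply hmy1
      rw [← hh, hinvA _ (hwA t)]
    · intro hh
      exact hy1 (BL_minj hinvA (hwA t) hyA hh)
  set len := bl + (k' - 1) with hlen
  apply hnc
  apply mk_altCycle len (fun i => if i < bl then bp i else w' (i - bl + 1)) (by omega)
  · intro i hi
    by_cases h : i < bl
    · rw [if_pos h]; exact hbmem _ h
    · rw [if_neg h]; exact hwA _
  · intro i hi
    by_cases h : i + 1 < bl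
    · rw [if_pos (by omega), if_pos h]
      exact hbstep _ h
    · by_cases h2 : i + 1 = bl
      · rw [if_pos (by omega), if_neg (by omega)]
        have he1 : i = bl - 1 := by omega
        have he2 : i + 1 - bl + 1 = 1 := by omega
        rw [he2, he1]
        exact hmid
      · rw [if_neg (by omega), if_neg (by omega)]
        have he2 : i + 1 - bl + 1 = (i - bl + 1) + 1 := by omega
        rw [he2]
        exact hwstep _ (by omega) (by omega)
  · rw [if_neg (by omega), if_pos (by omega)]
    have he : len - 1 - bl + 1 = k' - 1 := by omega
    rw [he]
    exact hwrap
  · intro i j hij hj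
    by_cases h : j < bl
    · rw [if_pos (by omega), if_pos h]
      exact hbdis _ _ hij h
    · by_cases h2 : i < bl
      · rw [if_pos h2, if_neg h]
        set tj := j - bl + 1 with htj
        have htj0 : tj % k' ≠ 0 := by
          have h1 : tj < k' := by omega
          have h2' : 1 ≤ tj := by omega
          rw [Nat.mod_eq_of_lt h1]
          omega
        obtain ⟨hs, hy1, hmy1⟩ := hwfar _ htj0
        obtain ⟨hps, hpms⟩ := hbpair i h2
        obtain ⟨hs', hy1', hmy1'⟩ := hwfar' _ htj0
        refine ⟨?_, ?_, ?_⟩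
        · rcases hps with hp | hp | hp
          · intro hh; rw [← hh] at hs; exact hs hp
          · intro hh; rw [← hh] at hy1; exact hy1 hp
          · intro hh; rw [← hh] at hmy1; exact hmy1 hp
        · rcases hps with hp | hp | hp
          · intro hh; rw [← hh] at hs'; exact hs' hp
          · intro hh; rw [← hh] at hy1'; exact hy1' hp
          · intro hh; rw [← hh] at hmy1'; exact hmy1' hp
        · rcases hpms with hp | hp | hp
          · intro hh; rw [← hh] at hs; exact hs hp
          · intro hh; rw [← hh] at hy1; exact hy1 hp
          · intro hh; rw [← hh] at hmy1; exact hmy1 hp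
      · rw [if_neg h2, if_neg h]
        set ti := i - bl + 1 with hti
        set tj := j - bl + 1 with htj
        have hmod : ti % k' ≠ tj % k' := by
          rw [Nat.mod_eq_of_lt (by omega), Nat.mod_eq_of_lt (by omega)]
          omega
        refine ⟨(hwdis _ _ hmod).1, (hwdis _ _ hmod).2, ?_⟩
        have := (hwdis _ _ (Ne.symm hmod)).2
        exact fun hh => this hh.symm

end Blossom4

section Blossom5

variable {W : Type*} {G : SimpleGraph W} {m : W → W} {A : Set W}
variable {d : ℕ} {u : ℕ → W} {y : W} {S : Set W}
variable (hinvA : ∀ v ∈ A, m (m v) = v) (hmemA : ∀ v ∈ A, m v ∈ A) (hneA : ∀ v ∈ A, m v ≠ v)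
variable (hnc : ¬ AltCycle G m A)
variable (humem : ∀ i, u i ∈ A) (hustep : ∀ i, G.Adj (m (u i)) (u (i + 1)))
variable (hP1 : ∀ s t, s < t → t ≤ d → u s ≠ u t)
variable (hP2 : ∀ s t, s < t → t - s < d → u t ≠ m (u s))
variable (hd2 : 2 ≤ d)
variable (hcross : u d = m (u 0))
variable (hy : y = m (u 0))
variable (hSdef : ∀ x, x ∈ S ↔ ∃ t, 1 ≤ t ∧ t < d ∧ (x = u t ∨ x = m (u t)))

include hinvA hmemA hneA hnc humem hustep hP1 hP2 hd2 hcross hy hSdef in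
private lemma contr_nc (B : Set W) (hB : ∀ x ∈ B, x ∈ A ∧ x ∉ S) :
    ¬ AltCycle (contrG G S y) m B := by
  have hyA : y ∈ A := BL_y_A humem hcross hy
  have hmyA : m y ∈ A := hmemA _ hyA
  have hScl : ∀ x ∈ S, m x ∈ S := BL_S_closed hinvA humem hSdef
  have hSA : ∀ x ∈ S, x ∈ A := BL_S_A hmemA humem hSdef
  rintro ⟨k', w, hk2, hwmem, hwper, hwstep, hwdis⟩
  have hwA : ∀ t, w t ∈ A := fun t => (hB _ (hwmem t)).1
  have hwS : ∀ t, w t ∉ S := fun t => (hB _ (hwmem t)).2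
  by_cases hvisit : ∃ i, w i = y ∨ w i = m y
  · obtain ⟨i₀, hv⟩ := hvisit
    set w' : ℕ → W := fun t => w (i₀ + t) with hw'
    have hw'0 : w' 0 = w i₀ := by simp [hw']
    have hper' : ∀ t, w' (t + k') = w' t := by
      intro t
      show w (i₀ + (t + k')) = w (i₀ + t)
      rw [show i₀ + (t + k') = (i₀ + t) + k' by omega, hwper]
    have hA' : ∀ t, w' t ∈ A := fun t => hwA _
    have hS' : ∀ t, w' t ∉ S := fun t => hwS _
    have hstep' : ∀ i, (contrG G S y).Adj (m (w' i)) (w' (i + 1)) := by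
      intro i
      have := hwstep (i₀ + i)
      rwa [show i₀ + i + 1 = i₀ + (i + 1) by omega] at this
    have hdis' : ∀ i j, i % k' ≠ j % k' → w' i ≠ w' j ∧ w' i ≠ m (w' j) := by
      intro i j hij
      refine hwdis _ _ (fun hc => hij ?_)
      exact Nat.ModEq.add_left_cancel' i₀ hc
    have hk'pos : 0 < k' := by omega
    have hmodsmall : ∀ t, 1 ≤ t → t ≤ k' - 1 → t % k' ≠ 0 := by
      intro t h1 h2
      rw [Nat.mod_eq_of_lt (by omega)]
      omega
    have hwk : w' k' = w' 0 := by
      have := hper' 0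
      rwa [Nat.zero_add] at this
    -- interior steps are genuine G-steps once we know the endpoints avoid y
    have hfar : ∀ t, t % k' ≠ 0 → w' t ≠ w' 0 ∧ w' t ≠ m (w' 0) := by
      intro t ht
      exact hdis' t 0 (by rwa [Nat.zero_mod])
    rcases hv with hv1 | hv2
    · -- w' 0 = y
      have hv1' : w' 0 = y := by rw [hw'0, hv1]
      have hwfarP : ∀ t, t % k' ≠ 0 → w' t ∉ S ∧ w' t ≠ y ∧ w' t ≠ m y := by
        intro t ht
        obtain ⟨ha, hb⟩ := hfar t ht
        rw [hv1'] at ha hb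
        exact ⟨hS' t, ha, hb⟩
      have hexit : G.Adj (m y) (w' 1) := by
        have h := hstep' 0
        rw [hv1'] at h
        rw [contrG_adj] at h
        obtain ⟨hne', hs1, hs2, hor⟩ := h
        rcases hor with h | h | h
        · exact h
        · exact absurd h.1 (hneA _ hyA)
        · exact absurd h.1 (hwfarP 1 (hmodsmall 1 le_rfl (by omega))).2.1
      have hin : ∃ wx, (wx ∈ S ∨ wx = y) ∧ G.Adj (m (w' (k' - 1))) wx := by
        have h := hstep' (k' - 1)
        rw [show k' - 1 + 1 = k' by omega, hwk, hv1'] at h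
        rw [contrG_adj] at h
        obtain ⟨hne', hs1, hs2, hor⟩ := h
        have hknz : (k' - 1) % k' ≠ 0 := hmodsmall _ (by omega) le_rfl
        rcases hor with h | h | h
        · exact ⟨y, Or.inr rfl, h⟩
        · exfalso
          have : w' (k' - 1) = m y := by
            rw [← hinvA _ (hA' (k' - 1)), h.1]
          exact (hwfarP _ hknz).2.2 this
        · obtain ⟨wx, hcond, hadj⟩ := h.2
          exact ⟨wx, hcond, hadj.symm⟩
      obtain ⟨wx, hcond, hinadj⟩ := hin
      obtain ⟨bl, bp, hpkg, h0, hlast, _, _⟩ :=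
        BPfwd hinvA hmemA humem hustep hP1 hP2 hd2 hcross hy hSdef wx hcond
      refine assemble hinvA hmemA hneA hnc hScl hSA hyA hk2 hA' hwfarP hdis' ?_ hpkg ?_ ?_
      · intro j hj1 hj2
        have h := hstep' j
        rw [contrG_adj] at h
        obtain ⟨hne', hs1, hs2, hor⟩ := h
        rcases hor with h | h | h
        · exact h
        · exfalso
          have : w' j = m y := by rw [← hinvA _ (hA' j), h.1]
          exact (hwfarP j (hmodsmall j hj1 (by omega))).2.2 this
        · exact absurd h.1 (hwfarP (j + 1) (hmodsmall _ (by omega) hj2)).2.1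
      · rw [hlast]
        exact hexit
      · rw [h0]
        exact hinadj
    · -- w' 0 = m y
      have hv2' : w' 0 = m y := by rw [hw'0, hv2]
      have hm0 : m (w' 0) = y := by rw [hv2', hinvA _ hyA]
      have hwfarP : ∀ t, t % k' ≠ 0 → w' t ∉ S ∧ w' t ≠ y ∧ w' t ≠ m y := by
        intro t ht
        obtain ⟨ha, hb⟩ := hfar t ht
        rw [hv2'] at ha
        rw [hm0] at hb
        exact ⟨hS' t, hb, ha⟩
      have hexit : ∃ wx, (wx ∈ S ∨ wx = y) ∧ G.Adj wx (w' 1) := by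
        have h := hstep' 0
        rw [hm0] at h
        rw [contrG_adj] at h
        obtain ⟨hne', hs1, hs2, hor⟩ := h
        rcases hor with h | h | h
        · exact ⟨y, Or.inr rfl, h⟩
        · exact h.2
        · exact absurd h.1 (hwfarP 1 (hmodsmall 1 le_rfl (by omega))).2.1
      have hin : G.Adj (m (w' (k' - 1))) (m y) := by
        have h := hstep' (k' - 1)
        rw [show k' - 1 + 1 = k' by omega, hwk, hv2'] at h
        rw [contrG_adj] at h
        obtain ⟨hne', hs1, hs2, hor⟩ := h
        have hknz : (k' - 1) % k' ≠ 0 := hmodsmall _ (by omega) le_rfl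
        rcases hor with h | h | h
        · exact h
        · exfalso
          have : w' (k' - 1) = m y := by rw [← hinvA _ (hA' (k' - 1)), h.1]
          exact (hwfarP _ hknz).2.2 this
        · exact absurd h.1 (BL_y_ne_my hneA humem hcross hy).symm
      obtain ⟨wx, hcond, hexadj⟩ := hexit
      have hwxA : wx ∈ A := by
        rcases hcond with h | h
        · exact hSA _ h
        · rw [h]; exact hyA
      obtain ⟨bl, bp, hpkg, h0, hlast, hb1, _⟩ :=
        BPfwd hinvA hmemA humem hustep hP1 hP2 hd2 hcross hy hSdef wx hcond
      have hpkg2 := BPrev hinvA hmemA hpkg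
      refine assemble hinvA hmemA hneA hnc hScl hSA hyA hk2 hA' hwfarP hdis' ?_ hpkg2 ?_ ?_
      · intro j hj1 hj2
        have h := hstep' j
        rw [contrG_adj] at h
        obtain ⟨hne', hs1, hs2, hor⟩ := h
        rcases hor with h | h | h
        · exact h
        · exfalso
          have : w' j = m y := by rw [← hinvA _ (hA' j), h.1]
          exact (hwfarP j (hmodsmall j hj1 (by omega))).2.2 this
        · exact absurd h.1 (hwfarP (j + 1) (hmodsmall _ (by omega) hj2)).2.1
      · show G.Adj (m (m (bp (bl - 1 - (bl - 1))))) (w' 1)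
        rw [show bl - 1 - (bl - 1) = 0 by omega, hinvA _ ?memb, h0]
        · exact hexadj
        case memb =>
          rw [h0]; exact hwxA
      · show G.Adj (m (w' (k' - 1))) (m (bp (bl - 1 - 0)))
        rw [Nat.sub_zero, hlast]
        exact hin
  · -- no visit to the pair {y, m y}: the cycle lifts directly
    push_neg at hvisit
    apply hnc
    refine ⟨k', w, hk2, hwA, hwper, ?_, hwdis⟩
    intro i
    have h := hwstep i
    rw [contrG_adj] at h
    obtain ⟨hne', hs1, hs2, hor⟩ := h
    rcases hor with h | h | h
    · exact h
    · exfalso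
      have : w i = m y := by rw [← hinvA _ (hwA i), h.1]
      exact (hvisit i).2 this
    · exact absurd h.1 (hvisit (i + 1)).1
end Blossom5

private lemma no_adj_reachable_eq {W : Type*} {H : SimpleGraph W} {a b : W}
    (h : ∀ x, ¬ H.Adj a x) (hr : H.Reachable a b) : a = b := by
  obtain ⟨w⟩ := hr
  cases w with
  | nil => rfl
  | cons hadj p => exact absurd hadj (h _)

section Projection

variable {W : Type*} {G : SimpleGraph W} {m : W → W} {A : Set W}
variable {y : W} {S : Set W}
variable [DecidablePred (· ∈ S)]
variable (hinvA : ∀ v ∈ A, m (m v) = v)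
variable (hyS : y ∉ S)
variable (hF6 : ∀ x ∈ S, ¬ G.Adj x (m y))
variable (hSA : ∀ x ∈ S, x ∈ A)

include hinvA hyS hF6 in
private lemma proj_step (z : W) (hzA : z ∈ A) (hzS : z ∉ S) {a b : W}
    (hadj : G.Adj a b) (hedne : s(a, b) ≠ s(z, m z)) :
    (if a ∈ S then y else a) = (if b ∈ S then y else b) ∨
    ((contrG G S y).deleteEdges {s(z, m z)}).Adj
      (if a ∈ S then y else a) (if b ∈ S then y else b) := by
  have key : ∀ a b : W, G.Adj a b → s(a, b) ≠ s(z, m z) → a ∈ S → b ∉ S → b ≠ y →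
      ((contrG G S y).deleteEdges {s(z, m z)}).Adj y b := by
    intro a b hadj hedne haS hbS hby
    rw [SimpleGraph.deleteEdges_adj]
    constructor
    · rw [contrG_adj]
      exact ⟨fun h => hby h.symm, hyS, hbS, Or.inr (Or.inl ⟨rfl, a, Or.inl haS, hadj⟩)⟩
    · simp only [Set.mem_singleton_iff]
      intro heq
      rw [Sym2.eq_iff] at heq
      rcases heq with ⟨h1, h2⟩ | ⟨h1, h2⟩
      · -- y = z, b = m z : then b = m y
        apply hF6 a haS
        have : b = m y := by rw [h2, ← h1]
        rwa [this] at hadj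
      · -- y = m z, b = z : then b = m y since m y = m (m z) = z
        apply hF6 a haS
        have : b = m y := by rw [h2, h1, hinvA _ hzA]
        rwa [this] at hadj
  by_cases haS : a ∈ S <;> by_cases hbS : b ∈ S
  · left; rw [if_pos haS, if_pos hbS]
  · rw [if_pos haS, if_neg hbS]
    by_cases hby : b = y
    · left; exact hby.symm
    · right; exact key a b hadj hedne haS hbS hby
  · rw [if_neg haS, if_pos hbS]
    by_cases hay : a = y
    · left; exact hay
    · right
      exact (key b a hadj.symm (by rwa [Sym2.eq_swap] at hedne) hbS haS hay).symm
  · rw [if_neg haS, if_neg hbS]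
    right
    rw [SimpleGraph.deleteEdges_adj]
    refine ⟨?_, by simpa using hedne⟩
    rw [contrG_adj]
    exact ⟨hadj.ne, haS, hbS, Or.inl hadj⟩

include hinvA hyS hF6 in
private lemma proj_walk (z : W) (hzA : z ∈ A) (hzS : z ∉ S) {a b : W}
    (hw : (G.deleteEdges {s(z, m z)}).Walk a b) :
    ((contrG G S y).deleteEdges {s(z, m z)}).Reachable
      (if a ∈ S then y else a) (if b ∈ S then y else b) := by
  induction hw with
  | nil => exact SimpleGraph.Reachable.refl _
  | cons h p ih =>
    rw [SimpleGraph.deleteEdges_adj] at h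
    rcases proj_step hinvA hyS hF6 z hzA hzS h.1 (by simpa using h.2) with hh | hh
    · rwa [hh]
    · exact (hh.reachable).trans ih

end Projection

private lemma kotzigAux {W : Type*} [Fintype W] :
    ∀ (n : ℕ) (A : Finset W) (G : SimpleGraph W) (m : W → W), A.card ≤ n →
      (∀ v ∈ A, m v ∈ A) → (∀ v ∈ A, m (m v) = v) → (∀ v ∈ A, m v ≠ v) →
      (∀ v ∈ A, G.Adj v (m v)) → (∀ a b, G.Adj a b → (a ∈ A ↔ b ∈ A)) →
      ¬ AltCycle G m (A : Set W) → A.Nonempty →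
      ∃ v ∈ A, ¬ (G.deleteEdges {s(v, m v)}).Reachable v (m v) := by
  intro n
  induction n with
  | zero =>
    intro A G m hcard _ _ _ _ _ _ hA
    rw [Nat.le_zero, Finset.card_eq_zero] at hcard
    rw [hcard] at hA
    exact absurd hA (by simp)
  | succ n ih =>
    intro A G m hcard hmem hinv hne hadj hcl hnc hA
    classical
    by_cases hdeg : ∀ v ∈ A, ∃ x, G.Adj (m v) x ∧ x ≠ v
    · -- every vertex of the matching has a non-matching edge
      have hdeg' : ∀ v, v ∈ A → ∃ x, G.Adj (m v) x ∧ x ≠ v ∧ x ∈ A := by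
        intro v hv
        obtain ⟨x, h1, h2⟩ := hdeg v hv
        exact ⟨x, h1, h2, (hcl _ _ h1).1 (hmem v hv)⟩
      set f : W → W := fun v => if h : v ∈ A then (hdeg' v h).choose else v with hf
      have hfspec : ∀ v ∈ A, G.Adj (m v) (f v) ∧ f v ≠ v ∧ f v ∈ A := by
        intro v hv
        have hfv : f v = (hdeg' v hv).choose := by rw [hf]; simp [hv]
        rw [hfv]
        exact (hdeg' v hv).choose_spec
      obtain ⟨v₀, hv₀⟩ := hA
      have hiter : ∀ t, f^[t] v₀ ∈ A := by
        intro t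
        induction t with
        | zero => exact hv₀
        | succ s ihs =>
          rw [Function.iterate_succ_apply']
          exact (hfspec _ ihs).2.2
      have hninj : ¬ Function.Injective (fun t : Fin (Fintype.card W + 1) => f^[t.1] v₀) := by
        intro hinj
        have := Fintype.card_le_of_injective _ hinj
        simp at this
      rw [Function.not_injective_iff] at hninj
      obtain ⟨i, j, hije, hijne⟩ := hninj
      have hlt : ∃ i' j' : ℕ, i' < j' ∧ f^[i'] v₀ = f^[j'] v₀ := by
        rcases Nat.lt_trichotomy i.1 j.1 with h | h | h
        · exact ⟨i.1, j.1, h, hije⟩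
        · exact absurd (Fin.ext h) hijne
        · exact ⟨j.1, i.1, h, hije.symm⟩
      obtain ⟨i', j', hij, heq⟩ := hlt
      have hiterx : ∀ t, f^[t] (f^[i'] v₀) ∈ A := by
        intro t
        rw [← Function.iterate_add_apply]
        exact hiter _
      have hperiodic : f^[j' - i'] (f^[i'] v₀) = f^[i'] v₀ := by
        rw [← Function.iterate_add_apply, show j' - i' + i' = j' by omega, ← heq]
      have hPex : ∃ k : ℕ, 1 ≤ k ∧ ∃ uu : ℕ → W, (∀ t, uu t ∈ A) ∧
          (∀ t, uu (t + k) = uu t) ∧ (∀ t, G.Adj (m (uu t)) (uu (t + 1))) ∧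
          (∀ t, uu (t + 1) ≠ uu t) := by
        refine ⟨j' - i', by omega, fun t => f^[t] (f^[i'] v₀), fun t => hiterx t,
          fun t => ?_, fun t => ?_, fun t => ?_⟩
        · show f^[t + (j' - i')] (f^[i'] v₀) = f^[t] (f^[i'] v₀)
          rw [Function.iterate_add_apply, hperiodic]
        · show G.Adj (m (f^[t] (f^[i'] v₀))) (f^[t + 1] (f^[i'] v₀))
          rw [Function.iterate_succ_apply']
          exact (hfspec _ (hiterx t)).1
        · show f^[t + 1] (f^[i'] v₀) ≠ f^[t] (f^[i'] v₀)
          rw [Function.iterate_succ_apply']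
          exact (hfspec _ (hiterx t)).2.1
      have hPspec := Nat.find_spec hPex
      set k₀ := Nat.find hPex with hk₀
      obtain ⟨hk₀1, u₀, hu₀A, hu₀per, hu₀step, hu₀ne⟩ := hPspec
      have hmin : ∀ kk, kk < k₀ → ¬ (1 ≤ kk ∧ ∃ uu : ℕ → W, (∀ t, uu t ∈ A) ∧
          (∀ t, uu (t + kk) = uu t) ∧ (∀ t, G.Adj (m (uu t)) (uu (t + 1))) ∧
          (∀ t, uu (t + 1) ≠ uu t)) := by
        intro kk h
        exact Nat.find_min hPex (by rw [← hk₀]; exact h)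
      have hL2 : ∀ a t, 1 ≤ t → t < k₀ → u₀ (a + t) ≠ u₀ a := by
        intro a t h1 h2 heq2
        apply hmin t h2
        rcases Nat.lt_or_ge t 2 with ht2 | ht2
        · have ht1 : t = 1 := by omega
          subst ht1
          exact absurd heq2 (hu₀ne a)
        · refine ⟨h1, fun s => u₀ (a + s % t), fun s => hu₀A _, fun s => by
            show u₀ (a + (s + t) % t) = u₀ (a + s % t)
            rw [Nat.add_mod_right], fun s => ?_, fun s => ?_⟩
          · show G.Adj (m (u₀ (a + s % t))) (u₀ (a + (s + 1) % t))
            rcases Nat.lt_or_ge (s % t + 1) t with h | h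
            · rw [succ_mod_of_lt ht2 h]
              have := hu₀step (a + s % t)
              rwa [show a + s % t + 1 = a + (s % t + 1) by omega] at this
            · have hseq : s % t + 1 = t := by
                have := Nat.mod_lt s (show 0 < t by omega)
                omega
              rw [succ_mod_of_eq ht2 hseq, Nat.add_zero, ← heq2]
              have := hu₀step (a + (t - 1))
              rwa [show a + (t - 1) + 1 = a + t by omega,
                show a + (t - 1) = a + s % t by omega] at this
          · show u₀ (a + (s + 1) % t) ≠ u₀ (a + s % t)
            rcases Nat.lt_or_ge (s % t + 1) t with h | h
            · rw [succ_mod_of_lt ht2 h]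
              have := hu₀ne (a + s % t)
              rwa [show a + s % t + 1 = a + (s % t + 1) by omega] at this
            · have hseq : s % t + 1 = t := by
                have := Nat.mod_lt s (show 0 < t by omega)
                omega
              rw [succ_mod_of_eq ht2 hseq, Nat.add_zero, ← heq2]
              have := hu₀ne (a + (t - 1))
              rwa [show a + (t - 1) + 1 = a + t by omega,
                show a + (t - 1) = a + s % t by omega] at this
      have hk₀2 : 2 ≤ k₀ := by
        rcases Nat.lt_or_ge k₀ 2 with h | h
        · exfalso
          have h1 : k₀ = 1 := by omega
          have hp := hu₀per 0
          rw [h1, Nat.zero_add] at hp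
          exact hu₀ne 0 (by rwa [Nat.zero_add])
        · exact h
      by_cases hcrossex : ∃ t, 1 ≤ t ∧ t < k₀ ∧ ∃ a, u₀ (a + t) = m (u₀ a)
      · have hdspec := Nat.find_spec hcrossex
        set d := Nat.find hcrossex with hd
        obtain ⟨hd1, hdk, a₀, hcrs⟩ := hdspec
        have hdmin : ∀ t, t < d → ¬ (1 ≤ t ∧ t < k₀ ∧ ∃ a, u₀ (a + t) = m (u₀ a)) := by
          intro t h
          exact Nat.find_min hcrossex (by rw [← hd]; exact h)
        have hd2 : 2 ≤ d := by
          rcases Nat.lt_or_ge d 2 with h | h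
          · exfalso
            have h1 : d = 1 := by omega
            rw [h1] at hcrs
            have := hu₀step a₀
            rw [hcrs] at this
            exact G.loopless.irrefl _ this
          · exact h
        set u₁ : ℕ → W := fun t => u₀ (a₀ + t) with hu₁
        have hu₁A : ∀ t, u₁ t ∈ A := fun t => hu₀A _
        have hu₁step : ∀ t, G.Adj (m (u₁ t)) (u₁ (t + 1)) := by
          intro t
          show G.Adj (m (u₀ (a₀ + t))) (u₀ (a₀ + (t + 1)))
          have := hu₀step (a₀ + t)
          rwa [show a₀ + t + 1 = a₀ + (t + 1) by omega] at this
        have hu₁P1 : ∀ s t, s < t → t ≤ d → u₁ s ≠ u₁ t := by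
          intro s t hst htd heq2
          have := hL2 (a₀ + s) (t - s) (by omega) (by omega)
          rw [show a₀ + s + (t - s) = a₀ + t by omega] at this
          exact this heq2.symm
        have hu₁P2 : ∀ s t, s < t → t - s < d → u₁ t ≠ m (u₁ s) := by
          intro s t hst htd heq2
          exact hdmin (t - s) htd ⟨by omega, by omega, a₀ + s,
            by rw [show a₀ + s + (t - s) = a₀ + t by omega]; exact heq2⟩
        have hu₁cross : u₁ d = m (u₁ 0) := by
          show u₀ (a₀ + d) = m (u₀ (a₀ + 0))
          rwa [Nat.add_zero]
        set y := m (u₁ 0) with hy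
        set S : Set W := {x | ∃ t, 1 ≤ t ∧ t < d ∧ (x = u₁ t ∨ x = m (u₁ t))} with hS
        have hSdef : ∀ x, x ∈ S ↔ ∃ t, 1 ≤ t ∧ t < d ∧ (x = u₁ t ∨ x = m (u₁ t)) :=
          fun x => Iff.rfl
        have hinvA' : ∀ v ∈ (A : Set W), m (m v) = v := fun v hv => hinv v hv
        have hmemA' : ∀ v ∈ (A : Set W), m v ∈ (A : Set W) := fun v hv => hmem v hv
        have hneA' : ∀ v ∈ (A : Set W), m v ≠ v := fun v hv => hne v hv
        have hyA : y ∈ (A : Set W) := BL_y_A hu₁A hu₁cross rfl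
        have hyS : y ∉ S := BL_y_notS hinvA' hu₁A hu₁P1 hu₁P2 hu₁cross rfl hSdef
        have hSA : ∀ x ∈ S, x ∈ (A : Set W) := BL_S_A hmemA' hu₁A hSdef
        have hScl : ∀ x ∈ S, m x ∈ S := BL_S_closed hinvA' hu₁A hSdef
        have hF6 : ∀ x ∈ S, ¬ G.Adj x (m y) :=
          noSMy hinvA' hmemA' hnc hu₁A hu₁step hu₁P1 hu₁P2 hd2 hu₁cross rfl hSdef
        set A' : Finset W := A.filter (fun x => x ∉ S) with hA'
        have hmemA'' : ∀ x, x ∈ A' ↔ x ∈ A ∧ x ∉ S := by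
          intro x; rw [hA', Finset.mem_filter]
        have hu₁1S : u₁ 1 ∈ S := ⟨1, le_rfl, by omega, Or.inl rfl⟩
        have hcard' : A'.card ≤ n := by
          have hss : A' ⊂ A := by
            rw [hA', Finset.ssubset_iff_of_subset (Finset.filter_subset _ _)]
            refine ⟨u₁ 1, hu₁A 1, ?_⟩
            intro hmem'
            exact (Finset.mem_filter.1 hmem').2 hu₁1S
          have := Finset.card_lt_card hss
          omega
        obtain ⟨z, hzA', hznr⟩ := ih A' (contrG G S y) m hcard'
          (by
            intro v hv
            rw [hmemA''] at hv ⊢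
            refine ⟨hmem v hv.1, fun hmS => ?_⟩
            have hvv := hScl _ hmS
            rw [hinv v hv.1] at hvv
            exact hv.2 hvv)
          (fun v hv => hinv v ((hmemA'' v).1 hv).1)
          (fun v hv => hne v ((hmemA'' v).1 hv).1)
          (by
            intro v hv
            rw [hmemA''] at hv
            rw [contrG_adj]
            refine ⟨(hne v hv.1).symm, hv.2, ?_, Or.inl (hadj v hv.1)⟩
            intro hmS
            have hvv := hScl _ hmS
            rw [hinv v hv.1] at hvv
            exact hv.2 hvv)
          (by
            intro a b hab
            rw [contrG_adj] at hab
            obtain ⟨hne', haS, hbS, hor⟩ := hab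
            rw [hmemA'', hmemA'']
            rcases hor with h | h | h
            · rw [hcl a b h]
              simp [haS, hbS]
            · obtain ⟨ha, wx, hwx, hadjb⟩ := h
              have hwxA : wx ∈ A := by
                rcases hwx with h' | h'
                · exact hSA _ h'
                · rw [h']; exact hyA
              have hbA : b ∈ A := (hcl _ _ hadjb).1 hwxA
              have haA : a ∈ A := by rw [ha]; exact hyA
              simp [haS, hbS, haA, hbA]
            · obtain ⟨hb, wx, hwx, hadja⟩ := h
              have hwxA : wx ∈ A := by
                rcases hwx with h' | h'
                · exact hSA _ h'
                · rw [h']; exact hyA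
              have haA : a ∈ A := (hcl _ _ hadja).1 hwxA
              have hbA : b ∈ A := by rw [hb]; exact hyA
              simp [haS, hbS, haA, hbA])
          (by
            have hcnc := contr_nc hinvA' hmemA' hneA' hnc hu₁A hu₁step hu₁P1 hu₁P2 hd2
              hu₁cross rfl hSdef (A' : Set W)
              (fun x hx => by
                have := (hmemA'' x).1 hx
                exact ⟨this.1, this.2⟩)
            exact hcnc)
          ⟨y, (hmemA'' y).2 ⟨hyA, hyS⟩⟩
        rw [hmemA''] at hzA'
        refine ⟨z, hzA'.1, ?_⟩
        intro hr
        apply hznr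
        obtain ⟨wk⟩ := hr
        have hproj := proj_walk (A := (A : Set W)) hinvA' hyS hF6 z hzA'.1 hzA'.2 wk
        rw [if_neg hzA'.2, if_neg (by
          intro hmS
          have hvv := hScl _ hmS
          rw [hinv z hzA'.1] at hvv
          exact hzA'.2 hvv)] at hproj
        exact hproj
      · exfalso
        apply hnc
        refine ⟨k₀, u₀, hk₀2, fun i => hu₀A i, hu₀per, hu₀step, ?_⟩
        intro i j hij
        have hred : ∀ x, u₀ x = u₀ (x % k₀) := per_reduce u₀ k₀ hu₀per
        have hcr : ∀ a b, a % k₀ < b % k₀ →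
            u₀ a ≠ u₀ b ∧ u₀ a ≠ m (u₀ b) ∧ m (u₀ a) ≠ u₀ b := by
          intro a b hab
          have ha : a % k₀ < k₀ := Nat.mod_lt _ (by omega)
          have hb : b % k₀ < k₀ := Nat.mod_lt _ (by omega)
          refine ⟨?_, ?_, ?_⟩
          · rw [hred a, hred b]
            have := hL2 (a % k₀) (b % k₀ - a % k₀) (by omega) (by omega)
            rw [show a % k₀ + (b % k₀ - a % k₀) = b % k₀ by omega] at this
            exact this.symm
          · rw [hred a, hred b]
            intro heqq
            apply hcrossex
            refine ⟨k₀ - (b % k₀ - a % k₀), by omega, by omega, b % k₀, ?_⟩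
            rw [show b % k₀ + (k₀ - (b % k₀ - a % k₀)) = a % k₀ + k₀ by omega, hu₀per]
            exact heqq
          · rw [hred a, hred b]
            intro heqq
            apply hcrossex
            exact ⟨b % k₀ - a % k₀, by omega, by omega, a % k₀,
              by rw [show a % k₀ + (b % k₀ - a % k₀) = b % k₀ by omega]; exact heqq.symm⟩
        rcases Nat.lt_trichotomy (i % k₀) (j % k₀) with h | h | h
        · exact ⟨(hcr i j h).1, (hcr i j h).2.1⟩
        · exact absurd h hij
        · exact ⟨((hcr j i h).1).symm, ((hcr j i h).2.2).symm⟩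
    · push_neg at hdeg
      obtain ⟨v, hvA, hv⟩ := hdeg
      refine ⟨m v, hmem v hvA, ?_⟩
      intro hr
      have hAdj0 : ∀ x, ¬ (G.deleteEdges {s(m v, m (m v))}).Adj (m v) x := by
        intro x hx
        rw [SimpleGraph.deleteEdges_adj] at hx
        have hxv : x = v := hv x hx.1
        apply hx.2
        rw [hxv, hinv v hvA]
        rfl
      have hequ := no_adj_reachable_eq hAdj0 hr
      rw [hinv v hvA] at hequ
      exact hne v hvA hequ

private def walkFromChain {V : Type*} (G : SimpleGraph V) (v : ℕ → V)
    (h : ∀ i, G.Adj (v i) (v (i + 1))) : (n : ℕ) → G.Walk (v 0) (v n)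
  | 0 => SimpleGraph.Walk.nil
  | n + 1 => (walkFromChain G v h n).concat (h n)

private lemma walkFromChain_edges {V : Type*} (G : SimpleGraph V) (v : ℕ → V)
    (h : ∀ i, G.Adj (v i) (v (i + 1))) (n : ℕ) :
    (walkFromChain G v h n).edges = (List.range n).map (fun i => s(v i, v (i + 1))) := by
  induction n with
  | zero => simp [walkFromChain]
  | succ n ihn =>
    rw [show walkFromChain G v h (n + 1) = (walkFromChain G v h n).concat (h n) from rfl,
      SimpleGraph.Walk.edges_concat, ihn, List.range_succ]
    simp

private lemma walkFromChain_support {V : Type*} (G : SimpleGraph V) (v : ℕ → V)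
    (h : ∀ i, G.Adj (v i) (v (i + 1))) (n : ℕ) :
    (walkFromChain G v h n).support = (List.range (n + 1)).map v := by
  induction n with
  | zero => simp [walkFromChain, List.range_succ]
  | succ n ihn =>
    rw [show walkFromChain G v h (n + 1) = (walkFromChain G v h n).concat (h n) from rfl,
      SimpleGraph.Walk.support_concat, ihn, List.range_succ (n := n + 1)]
    simp

private lemma no_pc_cycle_lift {V : Type*} (G : SimpleGraph V) (c : Sym2 V → Fin 2)
    (hno : ∀ (a : V) (w : G.Walk a a), ¬ G.IsAlternatingCycle c w)
    (k : ℕ) (v : ℕ → V) (hk : 3 ≤ k)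
    (hper : ∀ i, v (i + k) = v i)
    (hadj : ∀ i, G.Adj (v i) (v (i + 1)))
    (hdis : ∀ i j, i < j → j < k → v i ≠ v j)
    (hcol : ∀ i, c s(v (i + 1), v (i + 2)) ≠ c s(v i, v (i + 1))) : False := by
  have hvk : v k = v 0 := by have := hper 0; rwa [Nat.zero_add] at this
  have hvk1 : v (k + 1) = v 1 := by
    have := hper 1; rwa [show 1 + k = k + 1 by omega] at this
  have vinj : ∀ i j, i < k → j < k → v i = v j → i = j := by
    intro i j hi hj hij
    rcases Nat.lt_trichotomy i j with h | h | h
    · exact absurd hij (hdis i j h hj)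
    · exact h
    · exact absurd hij.symm (hdis j i h hi)
  set W₀ : G.Walk (v 0) (v 0) := (walkFromChain G v hadj k).copy rfl hvk with hW₀
  have hE : W₀.edges = (List.range k).map (fun i => s(v i, v (i + 1))) := by
    rw [hW₀, SimpleGraph.Walk.edges_copy, walkFromChain_edges]
  have hSu : W₀.support = (List.range (k + 1)).map v := by
    rw [hW₀, SimpleGraph.Walk.support_copy, walkFromChain_support]
  have hlen : W₀.edges.length = k := by rw [hE]; simp
  -- the walk is a cycle
  have hcyc : W₀.IsCycle := by
    refine ⟨⟨⟨?_⟩, ?_⟩, ?_⟩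
    · -- edges nodup
      rw [hE]
      refine List.Nodup.map_on ?_ List.nodup_range
      intro i hi j hj hij
      rw [List.mem_range] at hi hj
      rw [Sym2.eq_iff] at hij
      rcases hij with ⟨h1, _⟩ | ⟨h1, h2⟩
      · exact vinj _ _ hi hj h1
      · -- v i = v (j+1) and v (i+1) = v j
        by_cases hik : i + 1 = k <;> by_cases hjk : j + 1 = k
        · omega
        · -- i + 1 = k : v (i+1) = v 0, so v 0 = v j → j = 0; v i = v (j+1) → i = j+1 = 1, k = 2
          exfalso
          rw [hik, hvk] at h2
          have hj0 : j = 0 := (vinj _ _ (by omega) hj h2).symm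
          rw [hj0] at h1
          have : i = 1 := vinj _ _ hi (by omega) h1
          omega
        · exfalso
          rw [hjk, hvk] at h1
          have hi0 : i = 0 := vinj _ _ hi (by omega) h1
          rw [hi0] at h2
          have : j = 1 := (vinj _ _ (by omega) hj h2).symm
          omega
        · have e1 : i = j + 1 := vinj _ _ hi (by omega) h1
          have e2 : i + 1 = j := vinj _ _ (by omega) hj h2
          omega
    · -- ≠ nil
      intro hnil
      have := congrArg (SimpleGraph.Walk.length) hnil
      rw [SimpleGraph.Walk.length_nil, ← SimpleGraph.Walk.length_edges, hlen] at this
      omega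
    · -- support tail nodup
      rw [hSu, List.range_succ_eq_map]
      rw [List.map_cons, List.tail_cons, List.map_map]
      refine List.Nodup.map_on ?_ List.nodup_range
      intro i hi j hj hij
      rw [List.mem_range] at hi hj
      simp only [Function.comp_apply, Nat.succ_eq_add_one] at hij
      by_cases hik : i + 1 = k <;> by_cases hjk : j + 1 = k
      · omega
      · exfalso
        rw [hik, hvk] at hij
        have := vinj _ _ (by omega) (by omega) hij
        omega
      · exfalso
        rw [hjk, hvk] at hij
        have := vinj _ _ (by omega) (by omega) hij
        omega
      · have := vinj _ _ (by omega) (by omega) hij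
        omega
  -- the walk is alternating
  apply hno (v 0) W₀
  refine ⟨hcyc, ?_⟩
  intro i
  have hget : ∀ (t : ℕ) (ht : t < W₀.edges.length), W₀.edges.get ⟨t, ht⟩ = s(v t, v (t + 1)) := by
    intro t ht
    have ht' : t < k := by rwa [hlen] at ht
    simp only [List.get_eq_getElem]
    rw [List.getElem_of_eq hE, List.getElem_map, List.getElem_range]
  obtain ⟨i, hi⟩ := i
  have hik : i < k := by rwa [hlen] at hi
  rw [hget i hi, hget ((i + 1) % W₀.edges.length)]
  by_cases hlast : i + 1 = k
  · have hm : (i + 1) % W₀.edges.length = 0 := by rw [hlen, hlast, Nat.mod_self]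
    rw [hm]
    have h01 : (0 : ℕ) + 1 = 1 := rfl
    rw [h01, show v 0 = v (i + 1) by rw [hlast, hvk],
      show v 1 = v (i + 2) by rw [show i + 2 = k + 1 by omega, hvk1]]
    exact (hcol i).symm
  · have hm : (i + 1) % W₀.edges.length = i + 1 := by
      rw [hlen]; exact Nat.mod_eq_of_lt (by omega)
    rw [hm]
    exact (hcol i).symm

private def gswap : Fin 2 → Fin 2 := fun e => if e = 0 then 1 else 0

private lemma gswap_invol : ∀ e, gswap (gswap e) = e := by decide
private lemma gswap_ne : ∀ e, gswap e ≠ e := by decide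
private lemma gswap_inj : ∀ e e', gswap e = gswap e' → e = e' := by decide
private lemma fin2_cases : ∀ a b : Fin 2, a ≠ b → a ≠ gswap b → False := by decide
private lemma fin2_ports : ∀ a b e : Fin 2, a ≠ b →
    (a = e ∧ b = gswap e) ∨ (a = gswap e ∧ b = e) := by decide

/-- The port gadget: each vertex is split into two "ports", one per colour; the matching
joins the two ports of a vertex, and an edge of colour `γ` joins the `γ`-ports of its ends. -/
private def gadget {V : Type*} (G : SimpleGraph V) (c : Sym2 V → Fin 2) :
    SimpleGraph (V × Fin 2) where
  Adj p q := (p.1 = q.1 ∧ p.2 ≠ q.2) ∨ (G.Adj p.1 q.1 ∧ p.2 = q.2 ∧ c s(p.1, q.1) = p.2)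
  symm := by
    constructor
    rintro p q (⟨h1, h2⟩ | ⟨h1, h2, h3⟩)
    · exact Or.inl ⟨h1.symm, h2.symm⟩
    · refine Or.inr ⟨h1.symm, h2.symm, ?_⟩
      rw [show s(q.1, p.1) = s(p.1, q.1) from Sym2.eq_swap, h3, h2]
  loopless := by
    constructor
    rintro p (⟨_, h2⟩ | ⟨h1, _⟩)
    · exact h2 rfl
    · exact G.loopless.irrefl _ h1

private lemma gadget_adj {V : Type*} {G : SimpleGraph V} {c : Sym2 V → Fin 2}
    {p q : V × Fin 2} : (gadget G c).Adj p q ↔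
      (p.1 = q.1 ∧ p.2 ≠ q.2) ∨ (G.Adj p.1 q.1 ∧ p.2 = q.2 ∧ c s(p.1, q.1) = p.2) := Iff.rfl

/-- **Yeo's theorem for two colors (Grossman--Haggkvist).** If the edges of a finite simple graph `G` (with at least one vertex)
are colored so that `G` has no alternating cycle, then there is a vertex `v` such that every
connected component of `G - v` is joined to `v` by edges of one color only. -/
theorem yeo_two_colors {V : Type*} [Fintype V] [Nonempty V] (G : SimpleGraph V) (c : Sym2 V → Fin 2)
    (hno : ∀ (v : V) (w : G.Walk v v), ¬ G.IsAlternatingCycle c w) :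
    ∃ v : V, ∀ u u' : {x : V | x ≠ v}, G.Adj v u.1 → G.Adj v u'.1 →
      (G.induce {x : V | x ≠ v}).Reachable u u' → c s(v, u.1) = c s(v, u'.1) := by
  classical
  set GG := gadget G c with hGG
  set mm : V × Fin 2 → V × Fin 2 := fun p => (p.1, gswap p.2) with hmm
  have hnc : ¬ AltCycle GG mm ((Finset.univ : Finset (V × Fin 2)) : Set (V × Fin 2)) := by
    rintro ⟨k, u, hk2, -, huper, hustep, hudis⟩
    set vv : ℕ → V := fun i => (u i).1 with hvv
    set ee : ℕ → Fin 2 := fun i => (u i).2 with hee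
    have hmodne : ∀ i : ℕ, i % k ≠ (i + 1) % k := by
      intro i h
      have h' : (i + 0) % k = (i + 1) % k := by rwa [Nat.add_zero]
      have h2 := Nat.ModEq.add_left_cancel' i h'
      have : (0 : ℕ) % k = 1 % k := h2
      rw [Nat.zero_mod, Nat.mod_eq_of_lt (by omega)] at this
      omega
    have hkey : ∀ i, G.Adj (vv i) (vv (i + 1)) ∧ ee (i + 1) = gswap (ee i) ∧
        c s(vv i, vv (i + 1)) = gswap (ee i) := by
      intro i
      have hstep := hustep i
      rw [hGG, gadget_adj] at hstep
      obtain ⟨hd1, hd2⟩ := hudis i (i + 1) (hmodne i)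
      rcases hstep with ⟨h1, _⟩ | ⟨h1, h2, h3⟩
      · exfalso
        have hv : vv i = vv (i + 1) := h1
        have he1 : ee i ≠ ee (i + 1) := fun hh => hd1 (Prod.ext hv hh)
        have he2 : ee i ≠ gswap (ee (i + 1)) := fun hh => hd2 (Prod.ext hv hh)
        exact fin2_cases _ _ he1 he2
      · exact ⟨h1, h2.symm, h3⟩
    have hvvper : ∀ i, vv (i + k) = vv i := fun i => congrArg Prod.fst (huper i)
    have hvvdis : ∀ i j, i < j → j < k → vv i ≠ vv j := by
      intro i j hij hjk heq
      have hmne : i % k ≠ j % k := by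
        rw [Nat.mod_eq_of_lt (by omega), Nat.mod_eq_of_lt hjk]
        omega
      obtain ⟨hd1, hd2⟩ := hudis i j hmne
      have he1 : ee i ≠ ee j := fun hh => hd1 (Prod.ext heq hh)
      have he2 : ee i ≠ gswap (ee j) := fun hh => hd2 (Prod.ext heq hh)
      exact fin2_cases _ _ he1 he2
    have hk3 : 3 ≤ k := by
      by_contra hk3
      have hk2' : k = 2 := by omega
      have h0 := (hkey 0).2.2
      have h1 := (hkey 1).2.2
      have hv2 : vv 2 = vv 0 := by
        have := hvvper 0
        rwa [hk2', Nat.zero_add] at this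
      rw [show (1 : ℕ) + 1 = 2 from rfl, hv2,
        show s(vv 1, vv 0) = s(vv 0, vv 1) from Sym2.eq_swap] at h1
      rw [show (0 : ℕ) + 1 = 1 from rfl] at h0
      rw [h0] at h1
      have heq01 : ee 0 = ee 1 := gswap_inj _ _ h1
      have := (hkey 0).2.1
      rw [show (0 : ℕ) + 1 = 1 from rfl] at this
      rw [← heq01] at this
      exact gswap_ne _ this.symm
    have hcol : ∀ i, c s(vv (i + 1), vv (i + 2)) ≠ c s(vv i, vv (i + 1)) := by
      intro i
      have ha := (hkey (i + 1)).2.2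
      rw [show i + 1 + 1 = i + 2 from rfl] at ha
      rw [ha, (hkey i).2.2]
      intro hh
      have h2 := gswap_inj _ _ hh
      rw [(hkey i).2.1] at h2
      exact gswap_ne _ h2
    exact no_pc_cycle_lift G c hno k vv hk3 hvvper (fun i => (hkey i).1) hvvdis hcol
  obtain ⟨pe, -, hbr⟩ := kotzigAux (Finset.univ : Finset (V × Fin 2)).card Finset.univ GG mm
    le_rfl (fun v _ => Finset.mem_univ _)
    (fun v _ => Prod.ext rfl (gswap_invol v.2))
    (fun v _ h => gswap_ne v.2 (congrArg Prod.snd h))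
    (fun v _ => Or.inl ⟨rfl, (gswap_ne v.2).symm⟩)
    (fun a b _ => by simp)
    hnc
    Finset.univ_nonempty
  refine ⟨pe.1, ?_⟩
  intro uu uu' hadj1 hadj2 hreach
  by_contra hcne
  -- the deleted matching edge
  have hnotdel : ∀ x x' : V × Fin 2, x.1 ≠ pe.1 →
      s(x, x') ∉ ({s(pe, mm pe)} : Set (Sym2 (V × Fin 2))) := by
    intro x x' hx heq
    rw [Set.mem_singleton_iff, Sym2.eq_iff] at heq
    rcases heq with ⟨h1, _⟩ | ⟨h1, _⟩
    · exact hx (congrArg Prod.fst h1)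
    · apply hx
      rw [h1, hmm]
  have hmstep : ∀ x : V × Fin 2, x.1 ≠ pe.1 → ∀ δ δ' : Fin 2,
      (GG.deleteEdges {s(pe, mm pe)}).Reachable (x.1, δ) (x.1, δ') := by
    intro x hx δ δ'
    by_cases h : δ = δ'
    · rw [h]
    · apply SimpleGraph.Adj.reachable
      rw [SimpleGraph.deleteEdges_adj]
      exact ⟨Or.inl ⟨rfl, h⟩, hnotdel (x.1, δ) (x.1, δ') hx⟩
  have hlift : ∀ (a b : {x : V | x ≠ pe.1}),
      (G.induce {x : V | x ≠ pe.1}).Walk a b → ∀ δ δ' : Fin 2,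
      (GG.deleteEdges {s(pe, mm pe)}).Reachable (a.1, δ) (b.1, δ') := by
    intro a b wkk
    induction wkk with
    | @nil x =>
      intro δ δ'
      exact hmstep (x.1, δ) (by exact x.2) δ δ'
    | @cons x y b hadj q ih =>
      intro δ δ'
      have hG : G.Adj x.1 y.1 := hadj
      refine (hmstep (x.1, δ) (by exact x.2) δ (c s(x.1, y.1))).trans
        ((SimpleGraph.Adj.reachable ?_).trans (ih (c s(x.1, y.1)) δ'))
      rw [SimpleGraph.deleteEdges_adj]
      refine ⟨Or.inr ⟨hG, rfl, rfl⟩, hnotdel _ _ (by exact x.2)⟩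
  obtain ⟨wkk⟩ := hreach
  have hRu := hlift _ _ wkk (c s(pe.1, uu.1)) (c s(pe.1, uu'.1))
  have hstep1 : (GG.deleteEdges {s(pe, mm pe)}).Adj
      (pe.1, c s(pe.1, uu.1)) (uu.1, c s(pe.1, uu.1)) := by
    rw [SimpleGraph.deleteEdges_adj]
    constructor
    · exact Or.inr ⟨hadj1, rfl, rfl⟩
    · rw [show s((pe.1, c s(pe.1, uu.1)), (uu.1, c s(pe.1, uu.1))) =
        s((uu.1, c s(pe.1, uu.1)), (pe.1, c s(pe.1, uu.1))) from Sym2.eq_swap]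
      exact hnotdel _ _ (by exact uu.2)
  have hstep2 : (GG.deleteEdges {s(pe, mm pe)}).Adj
      (pe.1, c s(pe.1, uu'.1)) (uu'.1, c s(pe.1, uu'.1)) := by
    rw [SimpleGraph.deleteEdges_adj]
    constructor
    · exact Or.inr ⟨hadj2, rfl, rfl⟩
    · rw [show s((pe.1, c s(pe.1, uu'.1)), (uu'.1, c s(pe.1, uu'.1))) =
        s((uu'.1, c s(pe.1, uu'.1)), (pe.1, c s(pe.1, uu'.1))) from Sym2.eq_swap]
      exact hnotdel _ _ (by exact uu'.2)
  have hcontra : (GG.deleteEdges {s(pe, mm pe)}).Reachable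
      (pe.1, c s(pe.1, uu.1)) (pe.1, c s(pe.1, uu'.1)) :=
    (hstep1.reachable).trans (hRu.trans (hstep2.symm.reachable))
  apply hbr
  rcases fin2_ports _ _ pe.2 hcne with ⟨h1, h2⟩ | ⟨h1, h2⟩
  · rw [h1, h2] at hcontra
    exact hcontra
  · rw [h1, h2] at hcontra
    exact hcontra.symm
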